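/- Let Θ ∈ ∧²U and set exp(Θ) := Σ_{j=0}^{N} Θ^{∧j}/j! ∈ ∧^{even}U. Then {v = (w,θ) ∈ V : m_v(exp(Θ)) = 0} = {(−(θ⌟Θ), θ) : θ ∈ U*}, and this subspace is a maximal isotropic subspace of V. In particular exp(Θ) is an even pure spinor: it spans the line ℓ_{W_Θ} for the maximal isotropic subspace W_Θ := {(−(θ⌟Θ), θ) : θ ∈ U*}. -/

import Mathlib

/-!
Setup: `k` a field of characteristic zero, `U` a finite-dimensional `k`-vector space of
dimension `N`, `V := U ⊕ U*` with the hyperbolic symmetric bilinear form; `mOp v` is the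
operator `α ↦ w ∧ α + θ⌟α` on `∧U`, and `ℓ_W := {λ : m_v λ = 0 ∀ v ∈ W}`.
`Θ ∈ ∧²U`, with contraction map `c : U* → U`, `c θ = θ⌟Θ` (characterized by
`ι (c θ) = θ⌟Θ`), and `exp(Θ) := Σ_{j=0}^{N} Θ^{∧j}/j!`.
-/

open Module

/-- The operator `m_v : ∧U → ∧U`, `α ↦ w ∧ α + θ⌟α`, for `v = (w,θ) ∈ V = U × U*`. -/
noncomputable def mOp (k : Type*) [Field k] (U : Type*) [AddCommGroup U] [Module k U]
    (v : U × Module.Dual k U) : Module.End k (ExteriorAlgebra k U) :=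
  LinearMap.mulLeft k (ExteriorAlgebra.ι k v.1)
    + CliffordAlgebra.contractLeft (Q := (0 : QuadraticForm k U)) v.2

/-- The pure spinor space `ℓ_W := {λ ∈ ∧U : m_v(λ) = 0 for all v ∈ W}`. -/
noncomputable def ellW (k : Type*) [Field k] (U : Type*) [AddCommGroup U] [Module k U]
    (W : Submodule k (U × Module.Dual k U)) : Submodule k (ExteriorAlgebra k U) :=
  ⨅ v ∈ W, LinearMap.ker (mOp k U v)

open Module ExteriorAlgebra

namespace Stmt6Aux

variable {k : Type*} [Field k] {U : Type*} [AddCommGroup U] [Module k U]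

noncomputable abbrev ctr (θ : Module.Dual k U) :
    Module.End k (ExteriorAlgebra k U) :=
  CliffordAlgebra.contractLeft (Q := (0 : QuadraticForm k U)) θ

lemma ctr_ι_mul (θ : Module.Dual k U) (a : U) (b : ExteriorAlgebra k U) :
    ctr θ (ι k a * b) = θ a • b - ι k a * ctr θ b := by
  simpa using CliffordAlgebra.contractLeft_ι_mul (Q := (0 : QuadraticForm k U)) a b (d := θ)

lemma comm2 {x : ExteriorAlgebra k U}
    (hx : x ∈ (LinearMap.range (ι k : U →ₗ[k] ExteriorAlgebra k U)) ^ 2) (a : U) :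
    Commute (ι k a) x := by
  rw [pow_two] at hx
  refine Submodule.mul_induction_on hx ?_ ?_
  · rintro _ ⟨u, rfl⟩ _ ⟨v, rfl⟩
    have h1 : ∀ y z : U, ι k (M := U) y * ι k z = -(ι k z * ι k y) := by
      intro y z
      rw [eq_neg_iff_add_eq_zero, ι_add_mul_swap]
    unfold Commute SemiconjBy
    rw [← mul_assoc, h1 a u, neg_mul, mul_assoc, h1 a v, mul_neg, neg_neg, mul_assoc]
  · intro u v hu hv
    unfold Commute SemiconjBy at *
    rw [mul_add, add_mul, hu, hv]

lemma deriv2 {x : ExteriorAlgebra k U}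
    (hx : x ∈ (LinearMap.range (ι k : U →ₗ[k] ExteriorAlgebra k U)) ^ 2)
    (θ : Module.Dual k U) (b : ExteriorAlgebra k U) :
    ctr θ (x * b) = ctr θ x * b + x * ctr θ b := by
  rw [pow_two] at hx
  refine Submodule.mul_induction_on hx ?_ ?_
  · rintro _ ⟨u, rfl⟩ _ ⟨v, rfl⟩
    rw [mul_assoc, ctr_ι_mul, ctr_ι_mul, ctr_ι_mul, CliffordAlgebra.contractLeft_ι,
      ← Algebra.commutes, ← Algebra.smul_def]
    simp only [mul_sub, sub_mul, smul_mul_assoc, mul_smul_comm, mul_assoc]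
    abel
  · intro u v hu hv
    rw [add_mul, map_add, hu, hv]
    simp only [map_add, add_mul]
    abel


variable (k U) in
lemma powTop [FiniteDimensional k U] {n : ℕ} (hn : finrank k U < n) :
    (LinearMap.range (ι k : U →ₗ[k] ExteriorAlgebra k U)) ^ n = ⊥ := by
  show ⋀[k]^n U = ⊥
  rw [← ιMulti_span_fixedDegree, Submodule.span_eq_bot]
  rintro _ ⟨v, rfl⟩
  refine AlternatingMap.map_linearDependent _ v fun hv => ?_
  have := hv.fintype_card_le_finrank
  simp only [Fintype.card_fin] at this
  omega

lemma pow_mem {Θ : ExteriorAlgebra k U}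
    (hΘ : Θ ∈ (LinearMap.range (ι k : U →ₗ[k] ExteriorAlgebra k U)) ^ 2) (j : ℕ) :
    Θ ^ j ∈ (LinearMap.range (ι k : U →ₗ[k] ExteriorAlgebra k U)) ^ (2 * j) := by
  induction j with
  | zero => simpa using Submodule.one_le.1 le_rfl
  | succ j ih =>
      have h2 : 2 * (j + 1) = 2 + 2 * j := by ring
      rw [pow_succ' Θ j, h2, pow_add]
      exact Submodule.mul_mem_mul hΘ ih

lemma derivPow {Θ : ExteriorAlgebra k U}
    (hΘ : Θ ∈ (LinearMap.range (ι k : U →ₗ[k] ExteriorAlgebra k U)) ^ 2)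
    (θ : Module.Dual k U) (j : ℕ) (b : ExteriorAlgebra k U) :
    ctr θ (Θ ^ j * b) = ctr θ (Θ ^ j) * b + Θ ^ j * ctr θ b := by
  induction j generalizing b with
  | zero => simp [CliffordAlgebra.contractLeft_one]
  | succ j ih =>
      rw [pow_succ' Θ j, mul_assoc, deriv2 hΘ, ih, deriv2 hΘ]
      simp only [mul_add, add_mul, mul_assoc]
      abel

lemma ctrPow {Θ : ExteriorAlgebra k U}
    (hΘ : Θ ∈ (LinearMap.range (ι k : U →ₗ[k] ExteriorAlgebra k U)) ^ 2)
    {c : Module.Dual k U →ₗ[k] U}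
    (hc : ∀ θ : Module.Dual k U, ι k (c θ) = ctr θ Θ)
    (θ : Module.Dual k U) (j : ℕ) :
    ctr θ (Θ ^ (j + 1)) = (j + 1) • (ι k (c θ) * Θ ^ j) := by
  induction j with
  | zero => simp [← hc]
  | succ j ih =>
      have hcomm := (comm2 hΘ (c θ)).symm
      rw [pow_succ' Θ (j+1), deriv2 hΘ, ih, ← hc, mul_smul_comm,
        ← mul_assoc, hcomm.eq, mul_assoc, ← pow_succ']
      rw [succ_nsmul (ι k (c θ) * Θ ^ (j+1)) (j+1)]
      abel


variable (k U) in
/-- Projection onto the degree-`m` graded component. -/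
noncomputable def projGrade (m : ℕ) : ExteriorAlgebra k U →ₗ[k] ExteriorAlgebra k U :=
  (Submodule.subtype _) ∘ₗ
    (DirectSum.component k ℕ (fun n => (⋀[k]^n U : Submodule k (ExteriorAlgebra k U))) m) ∘ₗ
    (DirectSum.decomposeLinearEquiv (fun n => (⋀[k]^n U : Submodule k (ExteriorAlgebra k U)))).toLinearMap

lemma projGrade_apply (m : ℕ) (x : ExteriorAlgebra k U) :
    projGrade k U m x
      = (DirectSum.decompose (fun n => (⋀[k]^n U : Submodule k (ExteriorAlgebra k U))) x m
          : ExteriorAlgebra k U) := rfl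

lemma projGrade_same {m : ℕ} {x : ExteriorAlgebra k U} (hx : x ∈ ⋀[k]^m U) :
    projGrade k U m x = x := by
  rw [projGrade_apply, DirectSum.decompose_of_mem_same (fun n => (⋀[k]^n U : Submodule k (ExteriorAlgebra k U))) hx]

lemma projGrade_ne {m n : ℕ} {x : ExteriorAlgebra k U} (hx : x ∈ ⋀[k]^n U) (h : n ≠ m) :
    projGrade k U m x = 0 := by
  rw [projGrade_apply, DirectSum.decompose_of_mem_ne (fun n => (⋀[k]^n U : Submodule k (ExteriorAlgebra k U))) hx h]

lemma ι_mem_grade1 (x : U) : ι k x ∈ ⋀[k]^1 U := by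
  show ι k x ∈ LinearMap.range (ι k : U →ₗ[k] ExteriorAlgebra k U) ^ 1
  rw [pow_one]
  exact LinearMap.mem_range_self _ x

lemma ι_mul_exp_eq_zero [FiniteDimensional k U] {Θ : ExteriorAlgebra k U}
    (hΘ : Θ ∈ (LinearMap.range (ι k : U →ₗ[k] ExteriorAlgebra k U)) ^ 2) {x : U}
    (h : ι k x * (∑ j ∈ Finset.range (finrank k U + 1), (j.factorial : k)⁻¹ • Θ ^ j) = 0) :
    x = 0 := by
  have h1 : projGrade k U 1
      (ι k x * ∑ j ∈ Finset.range (finrank k U + 1), (j.factorial : k)⁻¹ • Θ ^ j) = ι k x := by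
    rw [Finset.mul_sum]
    simp only [mul_smul_comm, map_sum, map_smul]
    rw [Finset.sum_eq_single 0]
    · rw [pow_zero, mul_one, projGrade_same (ι_mem_grade1 x)]
      simp
    · intro j hj hj0
      have hmem : ι k x * Θ ^ j ∈ ⋀[k]^(1 + 2 * j) U := by
        show ι k x * Θ ^ j ∈ LinearMap.range (ι k : U →ₗ[k] ExteriorAlgebra k U) ^ (1 + 2 * j)
        rw [pow_add]
        exact Submodule.mul_mem_mul (ι_mem_grade1 x) (pow_mem hΘ j)
      rw [projGrade_ne hmem (by omega), smul_zero]
    · intro h0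
      exact absurd (Finset.mem_range.2 (by omega)) h0
  rw [h, map_zero] at h1
  have := h1.symm.trans (map_zero (ι k (M := U))).symm
  exact (ι_inj k x 0).1 this

section Euler

variable {ι' : Type*} [Fintype ι']

/-- The Euler (number) operator attached to a basis. -/
noncomputable def eulerOp (b : Basis ι' k U) : Module.End k (ExteriorAlgebra k U) :=
  ∑ i, (LinearMap.mulLeft k (ι k (b i))) ∘ₗ (ctr (b.coord i))

lemma eulerOp_grade (b : Basis ι' k U) {n : ℕ} {x : ExteriorAlgebra k U}
    (hx : x ∈ (LinearMap.range (ι k : U →ₗ[k] ExteriorAlgebra k U)) ^ n) :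
    eulerOp b x = n • x := by
  induction hx using Submodule.pow_induction_on_left' with
  | algebraMap r =>
      simp [eulerOp, LinearMap.sum_apply, CliffordAlgebra.contractLeft_algebraMap]
  | add u v i hu hv ihu ihv =>
      simp only [map_add, ihu, ihv, smul_add]
  | mem_mul m hm i y hy ih =>
      obtain ⟨v, rfl⟩ := hm
      have expand : eulerOp b (ι k v * y)
          = ∑ i, (b.coord i v • (ι k (b i) * y) - ι k (b i) * (ι k v * ctr (b.coord i) y)) := by
        simp only [eulerOp, LinearMap.sum_apply, LinearMap.comp_apply, LinearMap.mulLeft_apply,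
          ctr_ι_mul, mul_sub, mul_smul_comm]
      rw [expand, Finset.sum_sub_distrib]
      have e1 : ∑ i, b.coord i v • (ι k (b i) * y) = ι k v * y := by
        have : (∑ i, b.coord i v • ι k (b i)) = ι k v := by
          simp_rw [← map_smul, ← map_sum, Basis.coord_apply, b.sum_repr]
        rw [← this, Finset.sum_mul]
        simp_rw [smul_mul_assoc]
      have e2 : ∑ i, ι k (b i) * (ι k v * ctr (b.coord i) y)
          = -(ι k v * eulerOp b y) := by
        have hsw : ∀ i, ι k (b i) * (ι k v * ctr (b.coord i) y)
            = -(ι k v * (ι k (b i) * ctr (b.coord i) y)) := by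
          intro i
          have h1 : ι k (b i) * ι k v = -(ι k v * ι k (b i)) := by
            rw [eq_neg_iff_add_eq_zero, add_comm, ι_add_mul_swap]
          rw [← mul_assoc, h1, neg_mul, mul_assoc]
        simp_rw [hsw]
        rw [Finset.sum_neg_distrib, ← Finset.mul_sum]
        congr 2
        simp [eulerOp, LinearMap.sum_apply]
      rw [e1, e2, ih, sub_neg_eq_add, mul_smul_comm, succ_nsmul]
      abel

lemma eulerOp_apply_eq_sum (b : Basis ι' k U) (x : ExteriorAlgebra k U) :
    eulerOp b x = ∑ i, ι k (b i) * ctr (b.coord i) x := by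
  simp [eulerOp, LinearMap.sum_apply]

end Euler

lemma mem_span_one_of_ctr_zero [CharZero k] [FiniteDimensional k U] {x : ExteriorAlgebra k U}
    (hx : ∀ θ : Module.Dual k U, ctr θ x = 0) :
    x ∈ Submodule.span k {(1 : ExteriorAlgebra k U)} := by
  classical
  set ℳ := fun n => (⋀[k]^n U : Submodule k (ExteriorAlgebra k U)) with hℳ
  set b := Module.finBasis k U with hb
  have hD : eulerOp b x = 0 := by
    rw [eulerOp_apply_eq_sum]
    simp [hx]
  have hsum : x = ∑ n ∈ (DirectSum.decompose ℳ x).support,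
      (DirectSum.decompose ℳ x n : ExteriorAlgebra k U) :=
    (DirectSum.sum_support_decompose ℳ x).symm
  have hD2 : (0 : ExteriorAlgebra k U) = ∑ n ∈ (DirectSum.decompose ℳ x).support,
      n • (DirectSum.decompose ℳ x n : ExteriorAlgebra k U) := by
    rw [← hD]
    conv_lhs => rw [hsum]
    rw [map_sum]
    exact Finset.sum_congr rfl fun n _ => eulerOp_grade b (SetLike.coe_mem _)
  have key : ∀ m : ℕ, m ≠ 0 →
      (DirectSum.decompose ℳ x m : ExteriorAlgebra k U) = 0 := by
    intro m hm
    by_cases hms : m ∈ (DirectSum.decompose ℳ x).support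
    · have h3 : projGrade k U m (∑ n ∈ (DirectSum.decompose ℳ x).support,
          n • (DirectSum.decompose ℳ x n : ExteriorAlgebra k U))
          = m • (DirectSum.decompose ℳ x m : ExteriorAlgebra k U) := by
        rw [map_sum, Finset.sum_eq_single_of_mem m hms]
        · rw [map_nsmul, projGrade_same (SetLike.coe_mem _)]
        · intro n _ hnm
          rw [map_nsmul, projGrade_ne (SetLike.coe_mem _) hnm, smul_zero]
      rw [← hD2, map_zero] at h3
      have h4 : (m : k) • (DirectSum.decompose ℳ x m : ExteriorAlgebra k U) = 0 := by
        rw [Nat.cast_smul_eq_nsmul, ← h3]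
      rcases smul_eq_zero.1 h4 with h | h
      · exact absurd (Nat.cast_eq_zero.1 h) hm
      · exact h
    · rw [DFinsupp.notMem_support_iff.1 hms]
      rfl
  have hx0 : x = (DirectSum.decompose ℳ x 0 : ExteriorAlgebra k U) := by
    conv_lhs => rw [hsum]
    rw [Finset.sum_eq_single 0]
    · intro n _ hn
      exact key n hn
    · intro h0
      rw [DFinsupp.notMem_support_iff.1 h0]
      rfl
  rw [hx0]
  have hmem := SetLike.coe_mem (DirectSum.decompose ℳ x 0)
  have : ℳ 0 = Submodule.span k {(1 : ExteriorAlgebra k U)} := by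
    rw [hℳ]
    show (LinearMap.range (ι k : U →ₗ[k] ExteriorAlgebra k U)) ^ 0
      = Submodule.span k {(1 : ExteriorAlgebra k U)}
    rw [pow_zero, Submodule.one_eq_span]
  exact (le_of_eq this) hmem

section Exp

variable [CharZero k] [FiniteDimensional k U]
variable {Θ : ExteriorAlgebra k U}
  {c : Module.Dual k U →ₗ[k] U}


lemma ι_mul_pow_top (hΘ : Θ ∈ (LinearMap.range (ι k : U →ₗ[k] ExteriorAlgebra k U)) ^ 2) (u : U) :
    ι k u * Θ ^ (finrank k U) = 0 := by
  have h1 : ι k u * Θ ^ (finrank k U)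
      ∈ (LinearMap.range (ι k : U →ₗ[k] ExteriorAlgebra k U)) ^ (1 + 2 * finrank k U) := by
    rw [pow_add]
    exact Submodule.mul_mem_mul (ι_mem_grade1 u) (pow_mem hΘ _)
  rw [powTop k U (by omega)] at h1
  simpa using h1

lemma ctr_exp (hΘ : Θ ∈ (LinearMap.range (ι k : U →ₗ[k] ExteriorAlgebra k U)) ^ 2)
    (hc : ∀ θ : Module.Dual k U, ι k (c θ) = ctr θ Θ) (θ : Module.Dual k U) :
    ctr θ (∑ j ∈ Finset.range (finrank k U + 1), (j.factorial : k)⁻¹ • Θ ^ j)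
      = ι k (c θ) * (∑ j ∈ Finset.range (finrank k U + 1), (j.factorial : k)⁻¹ • Θ ^ j) := by
  rw [map_sum, Finset.sum_range_succ' (fun j => ctr θ ((j.factorial : k)⁻¹ • Θ ^ j))]
  have h0 : ctr θ (((Nat.factorial 0 : ℕ) : k)⁻¹ • Θ ^ 0) = 0 := by
    simp [CliffordAlgebra.contractLeft_one]
  rw [h0, add_zero]
  have hterm : ∀ j : ℕ, ctr θ (((j + 1).factorial : k)⁻¹ • Θ ^ (j + 1))
      = (j.factorial : k)⁻¹ • (ι k (c θ) * Θ ^ j) := by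
    intro j
    rw [map_smul, ctrPow hΘ hc, ← Nat.cast_smul_eq_nsmul k (j + 1), smul_smul]
    congr 1
    have h1 : ((j.factorial : ℕ) : k) ≠ 0 := Nat.cast_ne_zero.2 j.factorial_ne_zero
    have h2 : (((j + 1) : ℕ) : k) ≠ 0 := Nat.cast_ne_zero.2 (Nat.succ_ne_zero j)
    have h2' : ((j : k) + 1) ≠ 0 := by
      have := h2; push_cast at this; exact this
    rw [Nat.factorial_succ]
    push_cast
    field_simp
  simp_rw [hterm]
  rw [Finset.mul_sum]
  have hsplit : ∑ j ∈ Finset.range (finrank k U + 1),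
      ι k (c θ) * ((j.factorial : k)⁻¹ • Θ ^ j)
      = (∑ j ∈ Finset.range (finrank k U),
          (j.factorial : k)⁻¹ • (ι k (c θ) * Θ ^ j))
        + ((finrank k U).factorial : k)⁻¹ • (ι k (c θ) * Θ ^ (finrank k U)) := by
    rw [Finset.sum_range_succ]
    simp_rw [mul_smul_comm]
  rw [hsplit, ι_mul_pow_top hΘ, smul_zero, add_zero]

lemma deriv_exp (hΘ : Θ ∈ (LinearMap.range (ι k : U →ₗ[k] ExteriorAlgebra k U)) ^ 2)
    (θ : Module.Dual k U) (y : ExteriorAlgebra k U) :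
    ctr θ ((∑ j ∈ Finset.range (finrank k U + 1), (j.factorial : k)⁻¹ • Θ ^ j) * y)
      = ctr θ (∑ j ∈ Finset.range (finrank k U + 1), (j.factorial : k)⁻¹ • Θ ^ j) * y
        + (∑ j ∈ Finset.range (finrank k U + 1), (j.factorial : k)⁻¹ • Θ ^ j) * ctr θ y := by
  simp only [Finset.sum_mul, smul_mul_assoc, map_sum, map_smul, derivPow hΘ, smul_add,
    Finset.sum_add_distrib]

lemma isUnit_exp (hΘ : Θ ∈ (LinearMap.range (ι k : U →ₗ[k] ExteriorAlgebra k U)) ^ 2) :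
    IsUnit (∑ j ∈ Finset.range (finrank k U + 1), (j.factorial : k)⁻¹ • Θ ^ j) := by
  have hnilΘ : IsNilpotent Θ := by
    refine ⟨finrank k U + 1, ?_⟩
    have h1 := pow_mem hΘ (finrank k U + 1)
    rw [powTop k U (by omega)] at h1
    simpa using h1
  have hsplit : ∑ j ∈ Finset.range (finrank k U + 1), (j.factorial : k)⁻¹ • Θ ^ j
      = 1 + Θ * ∑ j ∈ Finset.range (finrank k U), (((j + 1).factorial : k)⁻¹ • Θ ^ j) := by
    rw [Finset.sum_range_succ' (fun j => (j.factorial : k)⁻¹ • Θ ^ j)]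
    rw [Finset.mul_sum]
    simp_rw [mul_smul_comm, ← pow_succ']
    simp [add_comm]
  rw [hsplit]
  refine IsNilpotent.isUnit_one_add ?_
  refine Commute.isNilpotent_mul_right ?_ hnilΘ
  exact Commute.sum_right _ _ _ fun j _ => ((Commute.refl Θ).pow_right j).smul_right _

end Exp

end Stmt6Aux

open ExteriorAlgebra in
/-- for `Θ ∈ ∧²U` with contraction map `c : U* → U` (`ι (c θ) = θ⌟Θ`) and
`exp(Θ) := Σ_{j=0}^{N} Θ^{∧j}/j!`, one has
`{v ∈ V : m_v(exp Θ) = 0} = W_Θ := {(−(θ⌟Θ), θ) : θ ∈ U*}`, the subspace `W_Θ` is maximal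
isotropic, and `exp(Θ)` spans the pure spinor line `ℓ_{W_Θ}`; in particular `exp(Θ)` is an
even pure spinor. -/
theorem stmt6 (k : Type*) [Field k] [CharZero k] (U : Type*) [AddCommGroup U] [Module k U]
    [FiniteDimensional k U]
    (Θ : ExteriorAlgebra k U)
    (hΘ : Θ ∈ (LinearMap.range (ExteriorAlgebra.ι k : U →ₗ[k] ExteriorAlgebra k U)) ^ 2)
    (c : Module.Dual k U →ₗ[k] U)
    (hc : ∀ θ : Module.Dual k U,
      ExteriorAlgebra.ι k (c θ) =
        CliffordAlgebra.contractLeft (Q := (0 : QuadraticForm k U)) θ Θ) :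
    let expΘ : ExteriorAlgebra k U :=
      ∑ j ∈ Finset.range (Module.finrank k U + 1), (j.factorial : k)⁻¹ • Θ ^ j
    let WΘ : Submodule k (U × Module.Dual k U) :=
      LinearMap.range (LinearMap.prod (-c) (LinearMap.id : Module.Dual k U →ₗ[k] Module.Dual k U))
    (∀ v : U × Module.Dual k U, mOp k U v expΘ = 0 ↔ v ∈ WΘ)
    ∧ (∀ v ∈ WΘ, ∀ w ∈ WΘ, v.2 w.1 + w.2 v.1 = (0 : k))
    ∧ Module.finrank k WΘ = Module.finrank k U
    ∧ ellW k U WΘ = Submodule.span k {expΘ} := by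
  intro expΘ WΘ
  have hc' : ∀ θ : Module.Dual k U, ι k (c θ) = Stmt6Aux.ctr θ Θ := hc
  have hexp : expΘ = ∑ j ∈ Finset.range (Module.finrank k U + 1), (j.factorial : k)⁻¹ • Θ ^ j :=
    rfl
  have hWmem : ∀ θ : Module.Dual k U,
      (LinearMap.prod (-c) (LinearMap.id : Module.Dual k U →ₗ[k] Module.Dual k U)) θ
        = (-(c θ), θ) := by
    intro θ
    simp [LinearMap.prod_apply]
  have hmOp : ∀ (v : U × Module.Dual k U) (x : ExteriorAlgebra k U),
      mOp k U v x = ι k v.1 * x + Stmt6Aux.ctr v.2 x := by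
    intro v x
    rfl
  -- Part 1
  have part1 : ∀ v : U × Module.Dual k U, mOp k U v expΘ = 0 ↔ v ∈ WΘ := by
    intro v
    constructor
    · intro h
      rw [hmOp, Stmt6Aux.ctr_exp hΘ hc' v.2] at h
      have h2 : ι k (v.1 + c v.2) * expΘ = 0 := by
        rw [map_add, add_mul]
        exact h
      have h3 := Stmt6Aux.ι_mul_exp_eq_zero hΘ h2
      refine ⟨v.2, ?_⟩
      rw [hWmem]
      have : v.1 = -(c v.2) := by
        rw [eq_neg_iff_add_eq_zero]
        exact h3
      rw [← this]
    · rintro ⟨θ, rfl⟩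
      rw [hWmem, hmOp]
      simp only
      rw [Stmt6Aux.ctr_exp hΘ hc' θ, map_neg, neg_mul, neg_add_cancel]
  -- Part 2
  have part2 : ∀ v ∈ WΘ, ∀ w ∈ WΘ, v.2 w.1 + w.2 v.1 = (0 : k) := by
    rintro _ ⟨θ, rfl⟩ _ ⟨θ', rfl⟩
    rw [hWmem, hWmem]
    simp only
    have e1 : Stmt6Aux.ctr θ (Stmt6Aux.ctr θ' Θ)
        = algebraMap k (ExteriorAlgebra k U) (θ (c θ')) := by
      rw [← hc' θ', CliffordAlgebra.contractLeft_ι]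
    have e2 : Stmt6Aux.ctr θ (Stmt6Aux.ctr θ' Θ)
        = -algebraMap k (ExteriorAlgebra k U) (θ' (c θ)) := by
      rw [CliffordAlgebra.contractLeft_comm, ← hc' θ, CliffordAlgebra.contractLeft_ι]
    have e3 : algebraMap k (ExteriorAlgebra k U) (θ (c θ') + θ' (c θ))
        = algebraMap k (ExteriorAlgebra k U) 0 := by
      rw [map_add, map_zero, e1.symm.trans e2]
      abel
    have e4 : θ (c θ') + θ' (c θ) = 0 :=
      (ExteriorAlgebra.algebraMap_inj (R := k) (M := U) (θ (c θ') + θ' (c θ)) 0).1 e3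
    have : θ (-(c θ')) + θ' (-(c θ)) = -(θ (c θ') + θ' (c θ)) := by
      rw [map_neg, map_neg]
      abel
    rw [this, e4, neg_zero]
  -- Part 3
  have hinj : Function.Injective
      (LinearMap.prod (-c) (LinearMap.id : Module.Dual k U →ₗ[k] Module.Dual k U)) := by
    intro a b h
    simpa using congrArg Prod.snd h
  have part3 : Module.finrank k WΘ = Module.finrank k U := by
    show Module.finrank k (LinearMap.range _) = _
    rw [LinearMap.finrank_range_of_inj hinj, Subspace.dual_finrank_eq]
  -- Part 4
  have part4 : ellW k U WΘ = Submodule.span k {expΘ} := by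
    apply le_antisymm
    · intro lam hlam
      have hlam' : ∀ θ : Module.Dual k U, Stmt6Aux.ctr θ lam = ι k (c θ) * lam := by
        intro θ
        have h1 := (Submodule.mem_iInf _).1 hlam
          ((LinearMap.prod (-c) (LinearMap.id : Module.Dual k U →ₗ[k] Module.Dual k U)) θ)
        have h2 := (Submodule.mem_iInf _).1 h1 ⟨θ, rfl⟩
        rw [LinearMap.mem_ker, hmOp, hWmem] at h2
        simp only at h2
        rw [map_neg, neg_mul] at h2
        linear_combination (norm := module) h2
      obtain ⟨u, hu⟩ := Stmt6Aux.isUnit_exp (k := k) (U := U) hΘ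
      set lam' := (↑u⁻¹ : ExteriorAlgebra k U) * lam with hlamdef
      have hlam2 : expΘ * lam' = lam := by
        rw [hlamdef, hexp, ← hu, ← mul_assoc, Units.mul_inv, one_mul]
      have hctr0 : ∀ θ : Module.Dual k U, Stmt6Aux.ctr θ lam' = 0 := by
        intro θ
        have hd := Stmt6Aux.deriv_exp hΘ θ lam'
        rw [← hexp, hlam2, hlam' θ, Stmt6Aux.ctr_exp hΘ hc' θ, ← hexp, ← hlam2,
          ← mul_assoc] at hd
        have h5 : expΘ * Stmt6Aux.ctr θ lam' = 0 := by
          linear_combination (norm := module) hd.symm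
        have h6 : (↑u⁻¹ : ExteriorAlgebra k U) * (expΘ * Stmt6Aux.ctr θ lam') = 0 := by
          rw [h5, mul_zero]
        rwa [hexp, ← hu, ← mul_assoc, Units.inv_mul, one_mul] at h6
      have hone := Stmt6Aux.mem_span_one_of_ctr_zero hctr0
      obtain ⟨r, hr⟩ := Submodule.mem_span_singleton.1 hone
      have : lam = r • expΘ := by
        rw [← hlam2, ← hr, mul_smul_comm, mul_one]
      rw [this]
      exact Submodule.smul_mem _ r (Submodule.mem_span_singleton_self _)
    · rw [Submodule.span_le, Set.singleton_subset_iff]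
      refine (Submodule.mem_iInf _).2 fun v => (Submodule.mem_iInf _).2 fun hv => ?_
      rw [LinearMap.mem_ker]
      exact (part1 v).2 hv
  exact ⟨part1, part2, part3, part4⟩
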